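/- Let m, n, r be positive integers and let η, G, Γ_u, Γ_v ≥ 0 be reals. Let U be a real m×r matrix with ‖U‖_F ≤ Γ_u and V a real n×r matrix with ‖V‖_F ≤ Γ_v. Let P be a real m×r matrix with ‖P‖_F ≤ G·Γ_v and Q a real n×r matrix with ‖Q‖_F ≤ G·Γ_u. Then ‖(U − η·P)·(V − η·Q)ᵀ − U·Vᵀ‖_F² ≤ 3·η²·G²·(Γ_u⁴ + Γ_v⁴ + η²·G²·Γ_u²·Γ_v²). -/

import Mathlib

set_option maxHeartbeats 1000000

open Matrix BigOperators

/-- Squared Frobenius norm of a real matrix. -/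
noncomputable def frobSq {m n : ℕ} (A : Matrix (Fin m) (Fin n) ℝ) : ℝ :=
  ∑ i, ∑ j, (A i j) ^ 2

/-- Frobenius norm of a real matrix. -/
noncomputable def frobNorm {m n : ℕ} (A : Matrix (Fin m) (Fin n) ℝ) : ℝ :=
  Real.sqrt (frobSq A)

attribute [local instance] Matrix.frobeniusSeminormedAddCommGroup Matrix.frobeniusNormSMulClass

lemma frobNorm_eq {m n : ℕ} (A : Matrix (Fin m) (Fin n) ℝ) : frobNorm A = ‖A‖ := by
  rw [Matrix.frobenius_norm_def, frobNorm, frobSq, Real.sqrt_eq_rpow]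
  congr 1
  refine Finset.sum_congr rfl fun i _ => Finset.sum_congr rfl fun j _ => ?_
  rw [show ((2:ℝ)) = ((2:ℕ):ℝ) by norm_num, Real.rpow_natCast, Real.norm_eq_abs, sq_abs]

lemma frobSq_eq {m n : ℕ} (A : Matrix (Fin m) (Fin n) ℝ) : frobSq A = ‖A‖ ^ 2 := by
  rw [← frobNorm_eq, frobNorm, Real.sq_sqrt]
  apply Finset.sum_nonneg; intro i _; apply Finset.sum_nonneg; intro j _; positivity

/-- Deterministic matrix core of Lemma 5: one gradient step of stepsize η on both
low-rank factors changes the recovered product U·Vᵀ by at most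
3η²G²(Γ_u⁴ + Γ_v⁴ + η²G²Γ_u²Γ_v²) in squared Frobenius norm. -/
theorem one_step_product_change_bound {m n r : ℕ}
    (hm : 0 < m) (hn : 0 < n) (hr : 0 < r)
    (η G Γu Γv : ℝ) (hη : 0 ≤ η) (hG : 0 ≤ G) (hΓu : 0 ≤ Γu) (hΓv : 0 ≤ Γv)
    (U : Matrix (Fin m) (Fin r) ℝ) (hU : frobNorm U ≤ Γu)
    (V : Matrix (Fin n) (Fin r) ℝ) (hV : frobNorm V ≤ Γv)
    (P : Matrix (Fin m) (Fin r) ℝ) (hP : frobNorm P ≤ G * Γv)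
    (Q : Matrix (Fin n) (Fin r) ℝ) (hQ : frobNorm Q ≤ G * Γu) :
    frobSq ((U - η • P) * (V - η • Q)ᵀ - U * Vᵀ) ≤
      3 * η ^ 2 * G ^ 2 * (Γu ^ 4 + Γv ^ 4 + η ^ 2 * G ^ 2 * Γu ^ 2 * Γv ^ 2) := by
  rw [frobNorm_eq] at hU hV hP hQ
  rw [frobSq_eq]
  have key : (U - η • P) * (V - η • Q)ᵀ - U * Vᵀ
      = (-(η • (U * Qᵀ)) + -(η • (P * Vᵀ))) + (η ^ 2) • (P * Qᵀ) := by
    simp only [Matrix.transpose_sub, Matrix.transpose_smul, Matrix.sub_mul, Matrix.mul_sub,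
      Matrix.smul_mul, Matrix.mul_smul, smul_smul]
    module
  rw [key]
  have hUn : 0 ≤ ‖U‖ := norm_nonneg _
  have hmul : ∀ {a b : ℕ} (A : Matrix (Fin a) (Fin r) ℝ) (B : Matrix (Fin b) (Fin r) ℝ),
      ‖A * Bᵀ‖ ≤ ‖A‖ * ‖B‖ := by
    intro a b A B
    calc ‖A * Bᵀ‖ ≤ ‖A‖ * ‖Bᵀ‖ := Matrix.frobenius_norm_mul A Bᵀ
    _ = ‖A‖ * ‖B‖ := by rw [Matrix.frobenius_norm_transpose]
  have h1 : ‖-(η • (U * Qᵀ))‖ ≤ η * (G * Γu ^ 2) := by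
    rw [norm_neg, norm_smul, Real.norm_eq_abs, abs_of_nonneg hη]
    calc η * ‖U * Qᵀ‖ ≤ η * (‖U‖ * ‖Q‖) := by
          exact mul_le_mul_of_nonneg_left (hmul U Q) hη
      _ ≤ η * (Γu * (G * Γu)) := by
          gcongr
      _ = η * (G * Γu ^ 2) := by ring
  have h2 : ‖-(η • (P * Vᵀ))‖ ≤ η * (G * Γv ^ 2) := by
    rw [norm_neg, norm_smul, Real.norm_eq_abs, abs_of_nonneg hη]
    calc η * ‖P * Vᵀ‖ ≤ η * (‖P‖ * ‖V‖) := by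
          exact mul_le_mul_of_nonneg_left (hmul P V) hη
      _ ≤ η * ((G * Γv) * Γv) := by
          gcongr
      _ = η * (G * Γv ^ 2) := by ring
  have h3 : ‖(η ^ 2) • (P * Qᵀ)‖ ≤ η ^ 2 * (G ^ 2 * Γu * Γv) := by
    rw [norm_smul, Real.norm_eq_abs, abs_of_nonneg (by positivity)]
    calc η ^ 2 * ‖P * Qᵀ‖ ≤ η ^ 2 * (‖P‖ * ‖Q‖) := by
          exact mul_le_mul_of_nonneg_left (hmul P Q) (by positivity)
      _ ≤ η ^ 2 * ((G * Γv) * (G * Γu)) := by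
          gcongr
      _ = η ^ 2 * (G ^ 2 * Γu * Γv) := by ring
  set a := η * (G * Γu ^ 2)
  set b := η * (G * Γv ^ 2)
  set c := η ^ 2 * (G ^ 2 * Γu * Γv)
  have htot : ‖(-(η • (U * Qᵀ)) + -(η • (P * Vᵀ))) + (η ^ 2) • (P * Qᵀ)‖ ≤ a + b + c := by
    calc ‖(-(η • (U * Qᵀ)) + -(η • (P * Vᵀ))) + (η ^ 2) • (P * Qᵀ)‖
        ≤ ‖(-(η • (U * Qᵀ)) + -(η • (P * Vᵀ)))‖ + ‖(η ^ 2) • (P * Qᵀ)‖ := norm_add_le _ _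
      _ ≤ (‖-(η • (U * Qᵀ))‖ + ‖-(η • (P * Vᵀ))‖) + ‖(η ^ 2) • (P * Qᵀ)‖ := by
          gcongr; exact norm_add_le _ _
      _ ≤ a + b + c := by gcongr
  have ha : 0 ≤ a := by positivity
  have hb : 0 ≤ b := by positivity
  have hc : 0 ≤ c := by positivity
  have hsq : ‖(-(η • (U * Qᵀ)) + -(η • (P * Vᵀ))) + (η ^ 2) • (P * Qᵀ)‖ ^ 2
      ≤ (a + b + c) ^ 2 := by
    apply sq_le_sq' <;> nlinarith [norm_nonneg ((-(η • (U * Qᵀ)) + -(η • (P * Vᵀ))) + (η ^ 2) • (P * Qᵀ))]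
  refine hsq.trans ?_
  have hcauchy : (a + b + c) ^ 2 ≤ 3 * (a ^ 2 + b ^ 2 + c ^ 2) := by nlinarith [sq_nonneg (a - b), sq_nonneg (a - c), sq_nonneg (b - c)]
  refine hcauchy.trans ?_
  simp only [a, b, c]
  nlinarith [sq_nonneg (η * G * Γu * Γv), sq_nonneg η, sq_nonneg G]
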